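/- arXiv:1905.07889 — 2 statements merged into one kernel-verified Lean document; each statement's English description precedes it below -/
import Mathlib

section
/- Let A be a self-adjoint operator with cyclic vector φ, and B = ⟨φ,·⟩φ. Suppose x_i < x_{i+1} are consecutive eigenvalues of A with no spectrum of A in (x_i, x_{i+1}). Then A+B has exactly one eigenvalue in the open interval (x_i, x_{i+1}). -/
open scoped InnerProductSpace

section Aux
variable {H : Type*} [NormedAddCommGroup H] [InnerProductSpace ℂ H] [CompleteSpace H]

lemma aux_inner_real {S : H →L[ℂ] H} (hS : IsSelfAdjoint S) (w : H) :
    ⟪w, S w⟫_ℂ = ((⟪w, S w⟫_ℂ).re : ℂ) := by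
  refine (Complex.conj_eq_iff_re.mp ?_).symm
  rw [inner_conj_symm]
  exact ContinuousLinearMap.isSelfAdjoint_iff_isSymmetric.mp hS w w

lemma aux_inner_re_le {S : H →L[ℂ] H} (hS : IsSelfAdjoint S) {b : ℝ}
    (h : ∀ z ∈ spectrum ℂ S, z.re ≤ b) (w : H) :
    (⟪w, S w⟫_ℂ).re ≤ b * ‖w‖ ^ 2 := by
  have hb1 : IsSelfAdjoint (algebraMap ℝ (H →L[ℂ] H) b - S) := by
    refine IsSelfAdjoint.sub ?_ hS
    exact IsSelfAdjoint.algebraMap _ (isSelfAdjoint_iff.mpr rfl)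
  have hpos : (0 : H →L[ℂ] H) ≤ algebraMap ℝ (H →L[ℂ] H) b - S := by
    rw [StarOrderedRing.nonneg_iff_spectrum_nonneg (R := ℝ) _ hb1]
    intro x hx
    have hx' : (algebraMap ℝ ℂ x) ∈ spectrum ℂ (algebraMap ℝ (H →L[ℂ] H) b - S) :=
      (spectrum.algebraMap_mem_iff ℂ).mpr hx
    rw [IsScalarTower.algebraMap_apply ℝ ℂ (H →L[ℂ] H) b,
      ← spectrum.singleton_sub_eq] at hx'
    obtain ⟨u, hu, v, hv, huv⟩ := Set.mem_sub.mp hx'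
    rw [Set.mem_singleton_iff] at hu
    subst hu
    have h2 := congrArg Complex.re huv
    simp at h2
    have := h v hv
    linarith
  have hip := ((ContinuousLinearMap.nonneg_iff_isPositive _).mp hpos).inner_nonneg_right w
  have happ : (algebraMap ℝ (H →L[ℂ] H) b - S) w = (b : ℂ) • w - S w := by
    simp [Algebra.algebraMap_eq_smul_one, ContinuousLinearMap.sub_apply,
      ContinuousLinearMap.smul_apply]
  rw [happ] at hip
  have h1 : RCLike.re (⟪w, w⟫_ℂ) = ‖w‖ ^ 2 := inner_self_eq_norm_sq (𝕜 := ℂ) w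
  replace hip := (Complex.nonneg_iff.mp hip).1
  simp only [inner_sub_right, inner_smul_right, map_sub, RCLike.mul_re,
    RCLike.re_to_complex, RCLike.im_to_complex, Complex.ofReal_re, Complex.ofReal_im,
    zero_mul, sub_zero, Complex.sub_re, Complex.mul_re] at hip
  rw [RCLike.re_to_complex] at h1
  rw [h1] at hip
  exact le_of_sub_nonneg hip

lemma aux_inner_le_re {S : H →L[ℂ] H} (hS : IsSelfAdjoint S) {a : ℝ}
    (h : ∀ z ∈ spectrum ℂ S, a ≤ z.re) (w : H) :
    a * ‖w‖ ^ 2 ≤ (⟪w, S w⟫_ℂ).re := by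
  have := aux_inner_re_le (hS.neg) (b := -a) (fun z hz => by
    rw [← spectrum.neg_eq, Set.mem_neg] at hz
    have := h (-z) hz
    simp only [Complex.neg_re] at this
    linarith) w
  simp only [ContinuousLinearMap.neg_apply, inner_neg_right, Complex.neg_re] at this
  linarith

lemma aux_eps (c P d : ℝ) (hc : 0 < c) (hP : 0 ≤ P) (hd : 0 < d) :
    ∃ ε > 0, ε ≤ d / 2 ∧ 1 + 2 * P / d < c / ε := by
  obtain ⟨K, hK⟩ : ∃ K : ℝ, K = 1 + 2 * P / d := ⟨_, rfl⟩
  have hKpos : 0 < K := by rw [hK]; positivity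
  refine ⟨min (d / 2) (c / (2 * K)), by positivity, min_le_left _ _, ?_⟩
  rw [← hK]
  have h2 : 0 < min (d / 2) (c / (2 * K)) := by positivity
  have h3 : c / (c / (2 * K)) ≤ c / min (d / 2) (c / (2 * K)) :=
    div_le_div_of_nonneg_left hc.le h2 (min_le_right _ _)
  have h4 : c / (c / (2 * K)) = 2 * K := by
    rw [div_div_eq_mul_div, mul_comm, mul_div_assoc, div_self (ne_of_gt hc), mul_one]
  linarith

end Aux

set_option maxHeartbeats 1000000 in
theorem stmt_6 {H : Type*} [NormedAddCommGroup H] [InnerProductSpace ℂ H] [CompleteSpace H]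
    (A : H →L[ℂ] H) (hA : IsSelfAdjoint A) (φ : H)
    -- `φ` is cyclic for `A`
    (hcyc : (Submodule.span ℂ (Set.range fun n : ℕ => (A ^ n) φ)).topologicalClosure = ⊤)
    -- `B = ⟨φ,·⟩φ`
    (B : H →L[ℂ] H) (hB : B = (innerSL ℂ φ).smulRight φ)
    (x₁ x₂ : ℝ) (h12 : x₁ < x₂)
    (he1 : Module.End.HasEigenvalue (A : H →ₗ[ℂ] H) (x₁ : ℂ))
    (he2 : Module.End.HasEigenvalue (A : H →ₗ[ℂ] H) (x₂ : ℂ))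
    (hgap : ∀ E ∈ Set.Ioo x₁ x₂, (E : ℂ) ∉ spectrum ℂ A) :
    ∃! E : ℝ, E ∈ Set.Ioo x₁ x₂ ∧
      Module.End.HasEigenvalue ((A + B : H →L[ℂ] H) : H →ₗ[ℂ] H) (E : ℂ) := by
  classical
  -- normalized eigenvectors
  have hev : ∀ (x : ℝ), Module.End.HasEigenvalue (A : H →ₗ[ℂ] H) (x : ℂ) →
      ∃ ψ : H, ‖ψ‖ = 1 ∧ A ψ = (x : ℂ) • ψ := by
    intro x hx
    obtain ⟨v, hv1, hv2⟩ := hx.exists_hasEigenvector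
    have hv : A v = (x : ℂ) • v := Module.End.mem_eigenspace_iff.mp hv1
    refine ⟨(‖v‖ : ℂ)⁻¹ • v, ?_, ?_⟩
    · have h0 : ‖v‖ ≠ 0 := norm_ne_zero_iff.mpr hv2
      rw [norm_smul]
      simp [h0]
    · rw [map_smul, hv, smul_comm]
  obtain ⟨ψ₁, hψ₁n, hψ₁⟩ := hev x₁ he1
  obtain ⟨ψ₂, hψ₂n, hψ₂⟩ := hev x₂ he2
  -- inner products with φ are nonzero by cyclicity
  have hinner_ne : ∀ (x : ℝ) (ψ : H), ‖ψ‖ = 1 → A ψ = (x : ℂ) • ψ → ⟪ψ, φ⟫_ℂ ≠ 0 := by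
    intro x ψ hn hψ hc
    have hψ0 : ψ ≠ 0 := by
      intro h
      rw [h, norm_zero] at hn
      norm_num at hn
    have hAn : ∀ n : ℕ, (A ^ n) ψ = ((x : ℂ) ^ n) • ψ := by
      intro n
      induction n with
      | zero => simp
      | succ n ih =>
        rw [pow_succ, ContinuousLinearMap.mul_apply, hψ, map_smul, ih, smul_smul,
          ← pow_succ']
    have hker : ∀ n : ℕ, (A ^ n) φ ∈ (innerSL ℂ ψ).ker := by
      intro n
      rw [LinearMap.mem_ker]
      have hsym := ContinuousLinearMap.isSelfAdjoint_iff_isSymmetric.mp (hA.pow n) ψ φ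
      have : (innerSL ℂ ψ) ((A ^ n) φ) = ⟪(A ^ n) ψ, φ⟫_ℂ := hsym.symm
      rw [ContinuousLinearMap.coe_coe, this, hAn n, inner_smul_left, hc, mul_zero]
    have hle : (Submodule.span ℂ (Set.range fun n : ℕ => (A ^ n) φ)).topologicalClosure ≤
        (innerSL ℂ ψ).ker := by
      apply Submodule.topologicalClosure_minimal
      · rw [Submodule.span_le]
        rintro _ ⟨n, rfl⟩
        exact hker n
      · exact ContinuousLinearMap.isClosed_ker _
    rw [hcyc] at hle
    have hmem : ψ ∈ (innerSL ℂ ψ).ker := hle Submodule.mem_top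
    rw [LinearMap.mem_ker] at hmem
    have : ⟪ψ, ψ⟫_ℂ = 0 := hmem
    exact hψ0 (inner_self_eq_zero.mp this)
  have hc₁ := hinner_ne x₁ ψ₁ hψ₁n hψ₁
  have hc₂ := hinner_ne x₂ ψ₂ hψ₂n hψ₂
  have hφ : φ ≠ 0 := by
    intro h
    exact hc₁ (by simp [h])
  -- resolvent
  set Rop : ℝ → (H →L[ℂ] H) := fun E => Ring.inverse (algebraMap ℂ (H →L[ℂ] H) (E : ℂ) - A)
    with hRop
  have hunit : ∀ E ∈ Set.Ioo x₁ x₂, IsUnit (algebraMap ℂ (H →L[ℂ] H) (E : ℂ) - A) := by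
    intro E hE
    exact not_not.mp fun h => (hgap E hE) (spectrum.mem_iff.mpr h)
  have hmulR : ∀ E ∈ Set.Ioo x₁ x₂,
      (algebraMap ℂ (H →L[ℂ] H) (E : ℂ) - A) * Rop E = 1 := by
    intro E hE
    exact Ring.mul_inverse_cancel _ (hunit E hE)
  have hRmul : ∀ E ∈ Set.Ioo x₁ x₂,
      Rop E * (algebraMap ℂ (H →L[ℂ] H) (E : ℂ) - A) = 1 := by
    intro E hE
    exact Ring.inverse_mul_cancel _ (hunit E hE)
  have hv_sa : ∀ E : ℝ, IsSelfAdjoint (algebraMap ℂ (H →L[ℂ] H) (E : ℂ) - A) := by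
    intro E
    refine IsSelfAdjoint.sub (IsSelfAdjoint.algebraMap _ ?_) hA
    rw [isSelfAdjoint_iff]
    exact Complex.conj_ofReal E
  have hR_sa : ∀ E : ℝ, IsSelfAdjoint (Rop E) := by
    intro E
    rw [hRop]
    exact (Ring.inverse_star _).symm.trans (by rw [(hv_sa E)])
  -- spectrum bounds
  have hspec : ∀ E ∈ Set.Ioo x₁ x₂, ∀ z ∈ spectrum ℂ (Rop E),
      -(x₂ - E)⁻¹ ≤ z.re ∧ z.re ≤ (E - x₁)⁻¹ := by
    intro E hE z hz
    obtain ⟨hE1, hE2⟩ := hE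
    have h := hunit E ⟨hE1, hE2⟩
    have hRu : Rop E = ↑h.unit⁻¹ := by
      show Ring.inverse _ = _
      conv_lhs => rw [← h.unit_spec]
      rw [Ring.inverse_unit]
    rw [hRu] at hz
    rw [← spectrum.map_inv, Set.mem_inv] at hz
    rw [h.unit_spec] at hz
    rw [← spectrum.singleton_sub_eq] at hz
    obtain ⟨u, hu, s, hs, hus⟩ := Set.mem_sub.mp hz
    rw [Set.mem_singleton_iff] at hu
    subst hu
    have hs_eq : s = (s.re : ℂ) := hA.mem_spectrum_eq_re hs
    have hsre : s.re ∉ Set.Ioo x₁ x₂ := fun hmem => hgap s.re hmem (hs_eq ▸ hs)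
    have hEs : E - s.re ≠ 0 := by
      rw [Set.mem_Ioo, not_and_or, not_lt, not_lt] at hsre
      rcases hsre with h' | h' <;> intro hcon <;> [linarith [hE1, sub_eq_zero.mp hcon];
        linarith [hE2, sub_eq_zero.mp hcon]]
    have hzinv : z⁻¹ = ((E - s.re : ℝ) : ℂ) := by
      rw [← hus, hs_eq]
      push_cast
      simp
    have hzre : z = (((E - s.re)⁻¹ : ℝ) : ℂ) := by
      rw [← inv_inv z, hzinv, Complex.ofReal_inv]
    have hzre' : z.re = (E - s.re)⁻¹ := by rw [hzre, Complex.ofReal_re]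
    rw [hzre']
    have hx2E : 0 < x₂ - E := by linarith
    have hEx1 : 0 < E - x₁ := by linarith
    rw [Set.mem_Ioo, not_and_or, not_lt, not_lt] at hsre
    rcases hsre with h' | h'
    · -- s.re ≤ x₁
      have h1 : 0 < E - s.re := by linarith
      constructor
      · have : 0 < (E - s.re)⁻¹ := inv_pos.mpr h1
        have : 0 < (x₂ - E)⁻¹ := inv_pos.mpr hx2E
        linarith
      · exact inv_anti₀ hEx1 (by linarith)
    · -- x₂ ≤ s.re
      have h1 : E - s.re < 0 := by linarith
      constructor
      · have key : (E - x₂)⁻¹ ≤ (E - s.re)⁻¹ := by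
          have ha : E - s.re < 0 := h1
          have hb : E - x₂ < 0 := by linarith
          have h2 : (E - s.re) * (E - s.re)⁻¹ = 1 := mul_inv_cancel₀ (ne_of_lt ha)
          have h3 : (E - x₂) * (E - x₂)⁻¹ = 1 := mul_inv_cancel₀ (ne_of_lt hb)
          nlinarith [mul_pos (neg_pos.mpr ha) (neg_pos.mpr hb)]
        have : (E - x₂)⁻¹ = -(x₂ - E)⁻¹ := by
          rw [show E - x₂ = -(x₂ - E) by ring, inv_neg]
        linarith
      · have h2 : (E - s.re)⁻¹ < 0 := by
          rw [inv_lt_zero]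
          exact h1
        have : 0 < (E - x₁)⁻¹ := inv_pos.mpr hEx1
        linarith
  -- quadratic form bounds
  have hform : ∀ E ∈ Set.Ioo x₁ x₂, ∀ w : H,
      -(x₂ - E)⁻¹ * ‖w‖ ^ 2 ≤ (⟪w, Rop E w⟫_ℂ).re ∧
      (⟪w, Rop E w⟫_ℂ).re ≤ (E - x₁)⁻¹ * ‖w‖ ^ 2 := by
    intro E hE w
    exact ⟨aux_inner_le_re (hR_sa E) (fun z hz => (hspec E hE z hz).1) w,
      aux_inner_re_le (hR_sa E) (fun z hz => (hspec E hE z hz).2) w⟩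
  -- resolvent on eigenvectors
  have hRψ : ∀ E ∈ Set.Ioo x₁ x₂, ∀ (x : ℝ) (ψ : H), A ψ = (x : ℂ) • ψ → x ≠ E →
      Rop E ψ = (((E - x : ℝ) : ℂ))⁻¹ • ψ := by
    intro E hE x ψ hψ hxE
    have hne : ((E - x : ℝ) : ℂ) ≠ 0 := by
      simp only [ne_eq, Complex.ofReal_eq_zero]
      intro hcon
      exact hxE (by linarith [sub_eq_zero.mp hcon])
    have h1 : (algebraMap ℂ (H →L[ℂ] H) (E : ℂ) - A) ψ = ((E - x : ℝ) : ℂ) • ψ := by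
      rw [ContinuousLinearMap.sub_apply, hψ, Algebra.algebraMap_eq_smul_one,
        ContinuousLinearMap.smul_apply, ContinuousLinearMap.one_apply]
      push_cast
      rw [← sub_smul]
    have h2 : Rop E ((algebraMap ℂ (H →L[ℂ] H) (E : ℂ) - A) ψ) = ψ := by
      rw [← ContinuousLinearMap.mul_apply, hRmul E hE, ContinuousLinearMap.one_apply]
    rw [h1, map_smul] at h2
    calc Rop E ψ = (((E - x : ℝ) : ℂ))⁻¹ • (((E - x : ℝ) : ℂ) • Rop E ψ) := by
          rw [smul_smul, inv_mul_cancel₀ hne, one_smul]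
      _ = (((E - x : ℝ) : ℂ))⁻¹ • ψ := by rw [h2]
  -- decomposition bound
  have hdecomp : ∀ E ∈ Set.Ioo x₁ x₂, ∀ (x : ℝ) (ψ : H), ‖ψ‖ = 1 →
      A ψ = (x : ℂ) • ψ → x ≠ E →
      ∃ w : H, ‖w‖ ≤ ‖φ‖ ∧
        (⟪φ, Rop E φ⟫_ℂ).re = ‖⟪ψ, φ⟫_ℂ‖ ^ 2 * (E - x)⁻¹ + (⟪w, Rop E w⟫_ℂ).re := by
    intro E hE x ψ hn hψ hxE
    set c := ⟪ψ, φ⟫_ℂ with hcdef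
    set w := φ - c • ψ with hwdef
    have hψψ : ⟪ψ, ψ⟫_ℂ = 1 := by
      rw [inner_self_eq_norm_sq_to_K, hn]
      norm_num
    have hψw : ⟪ψ, w⟫_ℂ = 0 := by
      rw [hwdef, inner_sub_right, inner_smul_right, hψψ, mul_one, ← hcdef, sub_self]
    have hwψ : ⟪w, ψ⟫_ℂ = 0 := by
      rw [← inner_conj_symm, hψw, map_zero]
    have hφdec : φ = c • ψ + w := by rw [hwdef]; abel
    have hRψ' := hRψ E hE x ψ hψ hxE
    have hsym := ContinuousLinearMap.isSelfAdjoint_iff_isSymmetric.mp (hR_sa E)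
    have hψRw : ⟪ψ, Rop E w⟫_ℂ = 0 := by
      calc ⟪ψ, Rop E w⟫_ℂ = ⟪Rop E ψ, w⟫_ℂ := (hsym ψ w).symm
        _ = 0 := by rw [hRψ', inner_smul_left, hψw, mul_zero]
    refine ⟨w, ?_, ?_⟩
    · have h6 : ‖φ‖ ^ 2 = ‖c • ψ‖ ^ 2 + ‖w‖ ^ 2 := by
        have h7 : RCLike.re ⟪c • ψ, w⟫_ℂ = 0 := by
          rw [inner_smul_left, hψw, mul_zero, map_zero]
        calc ‖φ‖ ^ 2 = ‖c • ψ + w‖ ^ 2 := by rw [← hφdec]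
          _ = ‖c • ψ‖ ^ 2 + 2 * RCLike.re ⟪c • ψ, w⟫_ℂ + ‖w‖ ^ 2 :=
              norm_add_sq (𝕜 := ℂ) _ _
          _ = ‖c • ψ‖ ^ 2 + ‖w‖ ^ 2 := by rw [h7]; ring
      nlinarith [norm_nonneg (c • ψ), norm_nonneg w, norm_nonneg φ]
    · have hinner : ⟪φ, Rop E φ⟫_ℂ =
          ((‖c‖ ^ 2 * (E - x)⁻¹ : ℝ) : ℂ) + ⟪w, Rop E w⟫_ℂ := by
        conv_lhs => rw [hφdec]
        rw [map_add, map_smul, hRψ']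
        simp only [inner_add_left, inner_add_right, inner_smul_left, inner_smul_right,
          hψψ, hψRw, hwψ, mul_zero, zero_add, add_zero, mul_one]
        have h5 : (c * (starRingEnd ℂ) c) = ((‖c‖ : ℂ)) ^ 2 := by
          rw [Complex.mul_conj, Complex.normSq_eq_norm_sq]
          push_cast
          ring
        push_cast
        linear_combination ((E : ℂ) - (x : ℂ))⁻¹ * h5
      rw [hinner, Complex.add_re, Complex.ofReal_re]
  set f : ℝ → ℝ := fun E => (⟪φ, Rop E φ⟫_ℂ).re with hf
  have hRφ : ∀ E ∈ Set.Ioo x₁ x₂, Rop E φ ≠ 0 := by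
    intro E hE h0
    have h7 : (algebraMap ℂ (H →L[ℂ] H) (E : ℂ) - A) (Rop E φ) = φ := by
      rw [← ContinuousLinearMap.mul_apply, hmulR E hE, ContinuousLinearMap.one_apply]
    rw [h0, map_zero] at h7
    exact hφ h7.symm
  -- key equivalence
  have hkey : ∀ E ∈ Set.Ioo x₁ x₂,
      (Module.End.HasEigenvalue ((A + B : H →L[ℂ] H) : H →ₗ[ℂ] H) (E : ℂ) ↔ f E = 1) := by
    intro E hE
    have hreal : ⟪φ, Rop E φ⟫_ℂ = ((f E : ℝ) : ℂ) := aux_inner_real (hR_sa E) φ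
    constructor
    · intro hev'
      obtain ⟨ψ, hm, hψ0⟩ := hev'.exists_hasEigenvector
      have hm' : A ψ + ⟪φ, ψ⟫_ℂ • φ = (E : ℂ) • ψ := by
        have := Module.End.mem_eigenspace_iff.mp hm
        rw [hB] at this
        simpa [ContinuousLinearMap.add_apply,
          ContinuousLinearMap.smulRight_apply] using this
      have hvψ : (algebraMap ℂ (H →L[ℂ] H) (E : ℂ) - A) ψ = ⟪φ, ψ⟫_ℂ • φ := by
        rw [ContinuousLinearMap.sub_apply, Algebra.algebraMap_eq_smul_one,
          ContinuousLinearMap.smul_apply, ContinuousLinearMap.one_apply, ← hm']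
        abel
      have hψR : ψ = ⟪φ, ψ⟫_ℂ • Rop E φ := by
        have h2 : Rop E ((algebraMap ℂ (H →L[ℂ] H) (E : ℂ) - A) ψ) = ψ := by
          rw [← ContinuousLinearMap.mul_apply, hRmul E hE, ContinuousLinearMap.one_apply]
        rw [hvψ, map_smul] at h2
        exact h2.symm
      have hcne : ⟪φ, ψ⟫_ℂ ≠ 0 := by
        intro h0
        rw [h0, zero_smul] at hψR
        exact hψ0 hψR
      have h3 : ⟪φ, ψ⟫_ℂ * ⟪φ, Rop E φ⟫_ℂ = ⟪φ, ψ⟫_ℂ * 1 := by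
        rw [mul_one, ← inner_smul_right]
        exact (congrArg (fun y => ⟪φ, y⟫_ℂ) hψR).symm
      have h4 : ⟪φ, Rop E φ⟫_ℂ = 1 := mul_left_cancel₀ hcne h3
      rw [hreal] at h4
      exact_mod_cast h4
    · intro hfE
      have h4 : ⟪φ, Rop E φ⟫_ℂ = 1 := by rw [hreal, hfE]; norm_num
      obtain ⟨ψ, hψdef⟩ : ∃ ψ, Rop E φ = ψ := ⟨_, rfl⟩
      rw [hψdef] at h4
      have hψ0 : ψ ≠ 0 := hψdef ▸ hRφ E hE
      have h7 : (algebraMap ℂ (H →L[ℂ] H) (E : ℂ) - A) ψ = φ := by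
        rw [← hψdef, ← ContinuousLinearMap.mul_apply, hmulR E hE,
          ContinuousLinearMap.one_apply]
      rw [ContinuousLinearMap.sub_apply, Algebra.algebraMap_eq_smul_one,
        ContinuousLinearMap.smul_apply, ContinuousLinearMap.one_apply] at h7
      have h6 : A ψ = (E : ℂ) • ψ - φ := by rw [← h7]; abel
      have happ : (A + B) ψ = (E : ℂ) • ψ := by
        rw [hB, ContinuousLinearMap.add_apply, ContinuousLinearMap.smulRight_apply, h6]
        have h5 : (innerSL ℂ φ) ψ = 1 := h4
        rw [h5, one_smul]
        abel
      exact Module.End.hasEigenvalue_of_hasEigenvector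
        ⟨Module.End.mem_eigenspace_iff.mpr happ, hψ0⟩
  -- derivative
  have hderiv : ∀ E ∈ Set.Ioo x₁ x₂, HasDerivAt f (-‖Rop E φ‖ ^ 2) E := by
    intro E hE
    have h := hunit E hE
    have hRu : Rop E = ↑h.unit⁻¹ := by
      show Ring.inverse _ = _
      conv_lhs => rw [← h.unit_spec]
      rw [Ring.inverse_unit]
    have hm : HasDerivAt (fun t : ℝ => algebraMap ℂ (H →L[ℂ] H) (t : ℂ) - A)
        (1 : H →L[ℂ] H) E := by
      have heq : (fun t : ℝ => algebraMap ℂ (H →L[ℂ] H) (t : ℂ) - A)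
          = fun t : ℝ => t • (1 : H →L[ℂ] H) - A := by
        funext t
        rw [Algebra.algebraMap_eq_smul_one]
        norm_num
      rw [heq]
      simpa using ((hasDerivAt_id E).smul_const (1 : H →L[ℂ] H)).sub_const A
    have hfd := (hasFDerivAt_ringInverse (𝕜 := ℂ) h.unit).restrictScalars ℝ
    rw [h.unit_spec] at hfd
    have hinv : HasDerivAt (fun t : ℝ => Rop t) (-(Rop E * Rop E)) E := by
      have hcomp := hfd.comp_hasDerivAt E hm
      have : (fun t : ℝ => Rop t) = Ring.inverse ∘ (fun t : ℝ =>
          algebraMap ℂ (H →L[ℂ] H) (t : ℂ) - A) := rfl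
      rw [this]
      refine hcomp.congr_deriv ?_
      rw [hRu]
      simp [ContinuousLinearMap.mulLeftRight_apply]
    have hT : HasDerivAt (fun t : ℝ => Rop t φ) ((-(Rop E * Rop E)) φ) E := by
      exact (((ContinuousLinearMap.apply ℂ H φ).restrictScalars
        ℝ).hasFDerivAt).comp_hasDerivAt E hinv
    set T : H →L[ℝ] ℝ := Complex.reCLM.comp ((innerSL ℂ φ).restrictScalars ℝ) with hT'
    have hTd := (T.hasFDerivAt).comp_hasDerivAt E hT
    have hfeq : f = fun t : ℝ => T (Rop t φ) := rfl
    have hval : T ((-(Rop E * Rop E)) φ) = -‖Rop E φ‖ ^ 2 := by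
      have h8 : T ((-(Rop E * Rop E)) φ) = -(⟪φ, Rop E (Rop E φ)⟫_ℂ).re := by
        simp only [ContinuousLinearMap.neg_apply, ContinuousLinearMap.mul_apply, map_neg]
        rfl
      rw [h8]
      have hsym := ContinuousLinearMap.isSelfAdjoint_iff_isSymmetric.mp (hR_sa E)
      have h9 : ⟪φ, Rop E (Rop E φ)⟫_ℂ = ⟪Rop E φ, Rop E φ⟫_ℂ := (hsym φ (Rop E φ)).symm
      rw [h9]
      have h10 : RCLike.re ⟪Rop E φ, Rop E φ⟫_ℂ = ‖Rop E φ‖ ^ 2 :=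
        inner_self_eq_norm_sq (𝕜 := ℂ) _
      rw [RCLike.re_to_complex] at h10
      rw [h10]
    rw [hfeq, ← hval]
    exact hTd
  -- strict antitonicity
  have hanti : StrictAntiOn f (Set.Ioo x₁ x₂) := by
    apply strictAntiOn_of_deriv_neg (convex_Ioo x₁ x₂)
    · exact fun E hE => ((hderiv E hE).continuousAt).continuousWithinAt
    · intro E hE
      rw [interior_Ioo] at hE
      rw [(hderiv E hE).deriv]
      have := hRφ E hE
      have : 0 < ‖Rop E φ‖ := norm_pos_iff.mpr this
      nlinarith
  -- existence of a point with f > 1 near x₁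
  have hbig : ∃ a ∈ Set.Ioo x₁ x₂, 1 < f a := by
    obtain ⟨ε, hε0, hεd, hεlt⟩ := aux_eps (‖⟪ψ₁, φ⟫_ℂ‖ ^ 2) (‖φ‖ ^ 2) (x₂ - x₁)
      (by have := norm_pos_iff.mpr hc₁; positivity) (by positivity) (by linarith)
    have hE : (x₁ + ε) ∈ Set.Ioo x₁ x₂ := ⟨by linarith, by linarith⟩
    refine ⟨x₁ + ε, hE, ?_⟩
    obtain ⟨w, hwle, hdec⟩ := hdecomp (x₁ + ε) hE x₁ ψ₁ hψ₁n hψ₁ (by intro hcon; linarith)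
    have hform' := (hform (x₁ + ε) hE w).1
    have hd2 : (0:ℝ) < x₂ - x₁ := by linarith
    have h1 : (x₂ - (x₁ + ε))⁻¹ ≤ 2 / (x₂ - x₁) := by
      rw [← inv_div]
      exact inv_anti₀ (by linarith) (by linarith)
    have h2 : ‖w‖ ^ 2 ≤ ‖φ‖ ^ 2 := by nlinarith [norm_nonneg w, norm_nonneg φ]
    have hipos : (0:ℝ) ≤ (x₂ - (x₁ + ε))⁻¹ := by
      apply inv_nonneg.mpr; linarith
    have h3 : (x₂ - (x₁ + ε))⁻¹ * ‖w‖ ^ 2 ≤ (2 / (x₂ - x₁)) * ‖φ‖ ^ 2 :=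
      mul_le_mul h1 h2 (by positivity) (by positivity)
    have hsimp : x₁ + ε - x₁ = ε := by ring
    rw [hsimp] at hdec
    have hepsdiv : ‖⟪ψ₁, φ⟫_ℂ‖ ^ 2 / ε = ‖⟪ψ₁, φ⟫_ℂ‖ ^ 2 * ε⁻¹ := div_eq_mul_inv _ _
    have hPd : 2 * ‖φ‖ ^ 2 / (x₂ - x₁) = 2 / (x₂ - x₁) * ‖φ‖ ^ 2 := by ring
    rw [hepsdiv] at hεlt
    rw [hPd] at hεlt
    linarith [hdec, hform']
  have hsmall : ∃ b ∈ Set.Ioo x₁ x₂, f b < -1 := by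
    obtain ⟨ε, hε0, hεd, hεlt⟩ := aux_eps (‖⟪ψ₂, φ⟫_ℂ‖ ^ 2) (‖φ‖ ^ 2) (x₂ - x₁)
      (by have := norm_pos_iff.mpr hc₂; positivity) (by positivity) (by linarith)
    have hE : (x₂ - ε) ∈ Set.Ioo x₁ x₂ := ⟨by linarith, by linarith⟩
    refine ⟨x₂ - ε, hE, ?_⟩
    obtain ⟨w, hwle, hdec⟩ := hdecomp (x₂ - ε) hE x₂ ψ₂ hψ₂n hψ₂ (by intro hcon; linarith)
    have hform' := (hform (x₂ - ε) hE w).2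
    have hd2 : (0:ℝ) < x₂ - x₁ := by linarith
    have h1 : (x₂ - ε - x₁)⁻¹ ≤ 2 / (x₂ - x₁) := by
      rw [← inv_div]
      exact inv_anti₀ (by linarith) (by linarith)
    have h2 : ‖w‖ ^ 2 ≤ ‖φ‖ ^ 2 := by nlinarith [norm_nonneg w, norm_nonneg φ]
    have hipos : (0:ℝ) ≤ (x₂ - ε - x₁)⁻¹ := by
      apply inv_nonneg.mpr; linarith
    have h3 : (x₂ - ε - x₁)⁻¹ * ‖w‖ ^ 2 ≤ (2 / (x₂ - x₁)) * ‖φ‖ ^ 2 :=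
      mul_le_mul h1 h2 (by positivity) (by positivity)
    have hsimp : (x₂ - ε - x₂)⁻¹ = -ε⁻¹ := by
      rw [show x₂ - ε - x₂ = -ε by ring, inv_neg]
    rw [hsimp] at hdec
    have hepsdiv : ‖⟪ψ₂, φ⟫_ℂ‖ ^ 2 / ε = ‖⟪ψ₂, φ⟫_ℂ‖ ^ 2 * ε⁻¹ := div_eq_mul_inv _ _
    have hPd : 2 * ‖φ‖ ^ 2 / (x₂ - x₁) = 2 / (x₂ - x₁) * ‖φ‖ ^ 2 := by ring
    rw [hepsdiv] at hεlt
    rw [hPd] at hεlt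
    nlinarith [hdec, hform']
  obtain ⟨a, ha, hfa⟩ := hbig
  obtain ⟨b, hb, hfb⟩ := hsmall
  have hab : a < b := by
    by_contra h
    push_neg at h
    rcases eq_or_lt_of_le h with h | h
    · subst h; linarith
    · have := hanti hb ha h; linarith
  have hcont : ContinuousOn f (Set.Icc a b) := by
    intro E hE
    exact ((hderiv E ⟨lt_of_lt_of_le ha.1 hE.1, lt_of_le_of_lt hE.2 hb.2⟩).continuousAt).continuousWithinAt
  have hsub : Set.Icc a b ⊆ Set.Ioo x₁ x₂ := fun E hE =>
    ⟨lt_of_lt_of_le ha.1 hE.1, lt_of_le_of_lt hE.2 hb.2⟩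
  have h1mem : (1 : ℝ) ∈ Set.Icc (f b) (f a) := ⟨by linarith, by linarith⟩
  obtain ⟨E₀, hE₀mem, hE₀⟩ := intermediate_value_Icc' (le_of_lt hab) hcont h1mem
  have hE₀Ioo : E₀ ∈ Set.Ioo x₁ x₂ := hsub hE₀mem
  refine ⟨E₀, ⟨hE₀Ioo, (hkey E₀ hE₀Ioo).mpr hE₀⟩, ?_⟩
  rintro E' ⟨hE'Ioo, hE'⟩
  have hfE' : f E' = 1 := (hkey E' hE'Ioo).mp hE'
  exact hanti.injOn hE'Ioo hE₀Ioo (by rw [hfE', hE₀])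
end

section
/- Let c > 0 and define g(x,y) = e^{−c‖x−y‖}/‖x−y‖ for x ≠ y in ℝ³. Then there exist constants C > 0 and c' ∈ (0, c) such that for all k, m ∈ ℝ³ with k ≠ m: ∫_{ℝ³} g(x,k) g(x,m) dx ≤ C e^{−c'‖k−m‖}. -/
open MeasureTheory

section Aux

open Measure Metric Set Module Real

private lemma integrable_fun_norm_aux {E : Type*} [NormedAddCommGroup E] [NormedSpace ℝ E]
    [Nontrivial E] [FiniteDimensional ℝ E] [MeasurableSpace E] [BorelSpace E]
    (μ : Measure E) [μ.IsAddHaarMeasure] {f : ℝ → ℝ}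
    (hf : IntegrableOn (fun y => y ^ (finrank ℝ E - 1) * f y) (Set.Ioi (0:ℝ))) :
    Integrable (fun x : E => f ‖x‖) μ := by
  have hIoi : Integrable (fun r : Ioi (0:ℝ) => f r) (volumeIoiPow (finrank ℝ E - 1)) := by
    rw [volumeIoiPow, integrable_withDensity_iff (by fun_prop)
      (ae_of_all _ fun r => ENNReal.ofReal_lt_top)]
    have : Integrable ((fun y : ℝ => f y * y ^ (finrank ℝ E - 1)) ∘ (Subtype.val))
        (comap Subtype.val volume : Measure (Ioi (0:ℝ))) := by
      have h' : Integrable (fun y : ℝ => f y * y ^ (finrank ℝ E - 1))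
          ((comap Subtype.val volume : Measure (Ioi (0:ℝ))).map Subtype.val) := by
        rw [map_comap_subtype_coe measurableSet_Ioi]
        exact hf.congr (ae_of_all _ fun y => by ring)
      exact ((MeasurableEmbedding.subtype_coe measurableSet_Ioi).integrable_map_iff).mp h'
    refine this.congr (ae_of_all _ fun r => ?_)
    simp [ENNReal.toReal_ofReal (pow_nonneg r.2.le _)]
  have hprod : Integrable (fun p : sphere (0:E) 1 × Ioi (0:ℝ) => f p.2)
      (μ.toSphere.prod (volumeIoiPow (finrank ℝ E - 1))) := by
    have hmap : Integrable (fun r : Ioi (0:ℝ) => f r)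
        ((μ.toSphere.prod (volumeIoiPow (finrank ℝ E - 1))).map Prod.snd) := by
      rw [map_snd_prod, integrable_smul_measure ?_ (measure_ne_top _ _)]
      · exact hIoi
      · rw [toSphere_apply_univ]
        refine mul_ne_zero (by exact_mod_cast finrank_pos.ne') ?_
        exact (measure_ball_pos μ 0 one_pos).ne'
    rw [integrable_map_measure hmap.1 measurable_snd.aemeasurable] at hmap
    exact hmap
  have hsub : Integrable ((fun x : E => f ‖x‖) ∘ (Subtype.val : ({(0:E)}ᶜ : Set E) → E))
      (μ.comap Subtype.val) := by
    have h := ((μ.measurePreserving_homeomorphUnitSphereProd).integrable_comp_emb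
      (Homeomorph.measurableEmbedding _)).mpr hprod
    refine h.congr (ae_of_all _ fun x => ?_)
    simp [Function.comp]
  have : Integrable (fun x : E => f ‖x‖) (μ.restrict {(0:E)}ᶜ) := by
    rw [← map_comap_subtype_coe (measurableSet_singleton (0:E)).compl μ,
      (MeasurableEmbedding.subtype_coe (measurableSet_singleton (0:E)).compl).integrable_map_iff]
    exact hsub
  rwa [restrict_compl_singleton] at this

private lemma pt_bound_aux {c a b d : ℝ} (hc : 0 < c) (ha : 0 < a) (hb : 0 < b)
    (hd : d ≤ a + b) :
    (exp (-c * a) / a) * (exp (-c * b) / b) ≤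
      exp (-(c/2) * d) * ((1/2) * (exp (-(c/2) * a) / a^2 + exp (-(c/2) * b) / b^2)) := by
  have hexp : exp (-c * a) * exp (-c * b) ≤
      exp (-(c/2) * d) * (exp (-(c/2) * a) * exp (-(c/2) * b)) := by
    rw [← exp_add, ← exp_add, ← exp_add]
    apply exp_le_exp.2
    nlinarith [hd, hc.le]
  have hAM : 1 / (a * b) ≤ (1/2) * (1 / a^2 + 1 / b^2) := by
    have key : (1/2) * (1 / a^2 + 1 / b^2) - 1 / (a * b) = (a - b)^2 / (2 * a^2 * b^2) := by
      field_simp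
      ring
    nlinarith [div_nonneg (sq_nonneg (a - b)) (by positivity : (0:ℝ) ≤ 2 * a^2 * b^2)]
  have h1 : exp (-(c/2) * a) ≤ 1 := exp_le_one_iff.2 (by nlinarith)
  have h2 : exp (-(c/2) * b) ≤ 1 := exp_le_one_iff.2 (by nlinarith)
  have p1 : (0:ℝ) < exp (-(c/2) * a) := exp_pos _
  have p2 : (0:ℝ) < exp (-(c/2) * b) := exp_pos _
  calc (exp (-c * a) / a) * (exp (-c * b) / b)
      = (exp (-c * a) * exp (-c * b)) / (a * b) := by rw [div_mul_div_comm]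
    _ ≤ (exp (-(c/2) * d) * (exp (-(c/2) * a) * exp (-(c/2) * b))) / (a * b) := by
        gcongr
    _ = exp (-(c/2) * d) * ((exp (-(c/2) * a) * exp (-(c/2) * b)) * (1 / (a * b))) := by
        ring
    _ ≤ exp (-(c/2) * d) * ((exp (-(c/2) * a) * exp (-(c/2) * b)) *
          ((1/2) * (1 / a^2 + 1 / b^2))) := by
        gcongr
    _ = exp (-(c/2) * d) * ((1/2) * ((exp (-(c/2) * a) * exp (-(c/2) * b)) / a^2 +
          (exp (-(c/2) * a) * exp (-(c/2) * b)) / b^2)) := by ring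
    _ ≤ exp (-(c/2) * d) * ((1/2) * (exp (-(c/2) * a) / a^2 + exp (-(c/2) * b) / b^2)) := by
        gcongr <;> nlinarith

end Aux

theorem stmt_18 (c : ℝ) (hc : 0 < c) :
    ∃ C > (0 : ℝ), ∃ c' ∈ Set.Ioo (0 : ℝ) c,
      ∀ k m : EuclideanSpace ℝ (Fin 3), k ≠ m →
        ∫ x : EuclideanSpace ℝ (Fin 3),
            (Real.exp (-c * ‖x - k‖) / ‖x - k‖) * (Real.exp (-c * ‖x - m‖) / ‖x - m‖) ≤
          C * Real.exp (-c' * ‖k - m‖) := by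
  set E := EuclideanSpace ℝ (Fin 3)
  have hdim : Module.finrank ℝ E = 3 := finrank_euclideanSpace_fin
  set W : E → ℝ := fun x => Real.exp (-(c/2) * ‖x‖) / ‖x‖^2 with hWdef
  have hW : Integrable W := by
    apply integrable_fun_norm_aux (volume : Measure E)
      (f := fun r => Real.exp (-(c/2) * r) / r^2)
    rw [hdim]
    refine ((exp_neg_integrableOn_Ioi 0 (half_pos hc)).congr_fun ?_ measurableSet_Ioi)
    intro y hy
    have hy0 : y ≠ 0 := (ne_of_gt hy)
    field_simp
  set I : ℝ := ∫ x, W x with hIdef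
  have hI0 : 0 ≤ I := integral_nonneg fun x => by positivity
  refine ⟨I + 1, by linarith, c/2, ⟨half_pos hc, half_lt_self hc⟩, fun k m hkm => ?_⟩
  set d : ℝ := ‖k - m‖ with hddef
  have hd : 0 < d := by
    rw [hddef, norm_pos_iff]
    exact sub_ne_zero.mpr hkm
  have hWk : Integrable (fun x => W (x - k)) := hW.comp_sub_right k
  have hWm : Integrable (fun x => W (x - m)) := hW.comp_sub_right m
  have hB : Integrable (fun x : E =>
      Real.exp (-(c/2) * d) * ((1/2) * (W (x - k) + W (x - m)))) :=
    ((hWk.add hWm).const_mul (1/2)).const_mul _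
  have hpt : ∀ x : E,
      (Real.exp (-c * ‖x - k‖) / ‖x - k‖) * (Real.exp (-c * ‖x - m‖) / ‖x - m‖) ≤
      Real.exp (-(c/2) * d) * ((1/2) * (W (x - k) + W (x - m))) := by
    intro x
    by_cases hxk : x = k
    · subst hxk
      simp only [sub_self, norm_zero, div_zero, zero_mul]
      simp only [hWdef]
      positivity
    · by_cases hxm : x = m
      · subst hxm
        simp only [sub_self, norm_zero, div_zero, mul_zero]
        simp only [hWdef]
        positivity
      · have ha : 0 < ‖x - k‖ := by rw [norm_pos_iff]; exact sub_ne_zero.mpr hxk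
        have hb : 0 < ‖x - m‖ := by rw [norm_pos_iff]; exact sub_ne_zero.mpr hxm
        have htri : d ≤ ‖x - k‖ + ‖x - m‖ := by
          have h := dist_triangle k x m
          simpa [hddef, dist_eq_norm, norm_sub_rev k x] using h
        exact pt_bound_aux hc ha hb htri
  calc ∫ x : E, (Real.exp (-c * ‖x - k‖) / ‖x - k‖) * (Real.exp (-c * ‖x - m‖) / ‖x - m‖)
      ≤ ∫ x : E, Real.exp (-(c/2) * d) * ((1/2) * (W (x - k) + W (x - m))) :=
        integral_mono_of_nonneg (ae_of_all _ fun x => by positivity) hB (ae_of_all _ hpt)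
    _ = Real.exp (-(c/2) * d) * ((1/2) * (I + I)) := by
        rw [integral_const_mul, integral_const_mul, integral_add hWk hWm,
          integral_sub_right_eq_self W k, integral_sub_right_eq_self W m]
    _ ≤ (I + 1) * Real.exp (-(c/2) * d) := by
        nlinarith [Real.exp_pos (-(c/2) * d), hI0]
end
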